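/- arXiv:math/0204347 — 4 statements merged into one kernel-verified Lean document; each statement's English description precedes it below -/
import Mathlib

section
/- Let A be a 2×2 integer matrix preserving the form [[1,0],[0,-1]]. If l > e > 0 and l' > e' > 0 are real numbers with A mapping (l,e) to (l',e'), then l = l' and e = e'. -/
/-- An integer matrix preserving the form `[[1,0],[0,-1]]` cannot map
`(l,e)` with `l > e > 0` to a different `(l',e')` with `l' > e' > 0`. -/
theorem stmt_3 (A : Matrix (Fin 2) (Fin 2) ℤ)
    (hA : A.transpose * !![1, 0; 0, -1] * A = !![1, 0; 0, -1])
    (l e l' e' : ℝ) (hle : l > e) (he : e > 0) (hle' : l' > e') (he' : e' > 0)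
    (hmap : (A.map (Int.cast : ℤ → ℝ)).mulVec ![l, e] = ![l', e']) :
    l = l' ∧ e = e' := by
  have h00 := congrFun (congrFun hA 0) 0
  have h11 := congrFun (congrFun hA 1) 1
  simp [Matrix.mul_apply, Fin.sum_univ_two, Matrix.transpose_apply] at h00 h11
  have hm0 := congrFun hmap 0
  have hm1 := congrFun hmap 1
  simp [Matrix.mulVec, dotProduct, Fin.sum_univ_two] at hm0 hm1
  set a := A 0 0
  set b := A 0 1
  set c := A 1 0
  set d := A 1 1
  have h1 : (a - c) * (a + c) = 1 := by nlinarith [h00]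
  have h2 : (d - b) * (d + b) = 1 := by nlinarith [h11]
  have hac : (a = 1 ∨ a = -1) ∧ c = 0 := by
    rcases Int.mul_eq_one_iff_eq_one_or_neg_one.mp h1 with ⟨u1, u2⟩ | ⟨u1, u2⟩ <;> omega
  have hbd : (d = 1 ∨ d = -1) ∧ b = 0 := by
    rcases Int.mul_eq_one_iff_eq_one_or_neg_one.mp h2 with ⟨u1, u2⟩ | ⟨u1, u2⟩ <;> omega
  obtain ⟨ha, hc⟩ := hac
  obtain ⟨hd, hb⟩ := hbd
  rw [hb] at hm0; rw [hc] at hm1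
  rcases ha with ha | ha <;> rcases hd with hd | hd <;>
    rw [ha] at hm0 <;> rw [hd] at hm1 <;> push_cast at hm0 hm1 <;>
    constructor <;> linarith
end

section
/- Let u₁, u₂, u₃, u₄ ∈ ℤ² satisfy det(u₁,u₂) = det(u₂,u₃) = det(u₃,u₄) = det(u₄,u₁) = 1 (where det(u,v) denotes the determinant of the 2×2 matrix with columns u and v). If u₁ = (1,0) and u₂ = (0,1), then u₃ = (-1,k) and u₄ = (l,-1) for some integers k, l with k·l = 0. -/
/-- For inward normals of a four-edged Delzant polygon with `u₁ = (1,0)`,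
`u₂ = (0,1)`: we get `u₃ = (-1,k)` and `u₄ = (l,-1)` with `k·l = 0`. -/
theorem stmt_4 (u₁ u₂ u₃ u₄ : ℤ × ℤ)
    (h₁₂ : u₁.1 * u₂.2 - u₁.2 * u₂.1 = 1)
    (h₂₃ : u₂.1 * u₃.2 - u₂.2 * u₃.1 = 1)
    (h₃₄ : u₃.1 * u₄.2 - u₃.2 * u₄.1 = 1)
    (h₄₁ : u₄.1 * u₁.2 - u₄.2 * u₁.1 = 1)
    (hu₁ : u₁ = (1, 0)) (hu₂ : u₂ = (0, 1)) :
    ∃ k l : ℤ, u₃ = (-1, k) ∧ u₄ = (l, -1) ∧ k * l = 0 := by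
  subst hu₁ hu₂
  simp at h₂₃ h₄₁
  refine ⟨u₃.2, u₄.1, ?_, ?_, ?_⟩
  · rw [← h₂₃]; simp
  · rw [← h₄₁]; simp
  · nlinarith [h₃₄]
end

section
/- Let u₁, u₂, u₃, u₄ ∈ ℤ² satisfy det(uᵢ, u_{i+1}) = 1 for i = 1,2,3,4 (indices mod 4). Then there exists a matrix R ∈ GL(2,ℤ) (an integer matrix with determinant ±1) such that R·u₁ = (1,0), R·u₂ = (0,1), and either R·u₃ = (-1,0) or R·u₄ = (0,-1). -/
/-- Normals of a four-edged Delzant polygon can be normalized by `GL(2,ℤ)` so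
that `u₁ ↦ (1,0)`, `u₂ ↦ (0,1)`, and `u₃ ↦ (-1,0)` or `u₄ ↦ (0,-1)`. -/
theorem stmt_5 (u₁ u₂ u₃ u₄ : Fin 2 → ℤ)
    (h₁₂ : u₁ 0 * u₂ 1 - u₁ 1 * u₂ 0 = 1)
    (h₂₃ : u₂ 0 * u₃ 1 - u₂ 1 * u₃ 0 = 1)
    (h₃₄ : u₃ 0 * u₄ 1 - u₃ 1 * u₄ 0 = 1)
    (h₄₁ : u₄ 0 * u₁ 1 - u₄ 1 * u₁ 0 = 1) :
    ∃ R : Matrix (Fin 2) (Fin 2) ℤ, (R.det = 1 ∨ R.det = -1) ∧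
      R.mulVec u₁ = ![1, 0] ∧ R.mulVec u₂ = ![0, 1] ∧
      (R.mulVec u₃ = ![-1, 0] ∨ R.mulVec u₄ = ![0, -1]) := by
  have key : (-(u₁ 1) * u₃ 0 + u₁ 0 * u₃ 1) * (u₂ 1 * u₄ 0 - u₂ 0 * u₄ 1) = 0 := by
    linear_combination (u₄ 0 * u₁ 1 - u₄ 1 * u₁ 0) * h₂₃ + h₄₁ -
      (u₃ 0 * u₄ 1 - u₃ 1 * u₄ 0) * h₁₂ - h₃₄
  refine ⟨!![u₂ 1, -(u₂ 0); -(u₁ 1), u₁ 0], ?_, ?_, ?_, ?_⟩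
  · left
    simp [Matrix.det_fin_two]
    linarith
  · funext i; fin_cases i <;>
      simp [Matrix.mulVec, dotProduct, Fin.sum_univ_two] <;> linarith
  · funext i; fin_cases i <;>
      simp [Matrix.mulVec, dotProduct, Fin.sum_univ_two] <;> linarith
  · rcases mul_eq_zero.mp key with h | h
    · left
      funext i; fin_cases i <;>
        simp [Matrix.mulVec, dotProduct, Fin.sum_univ_two] <;> linarith
    · right
      funext i; fin_cases i <;>
        simp [Matrix.mulVec, dotProduct, Fin.sum_univ_two] <;> linarith
end

section
/- Every convex polygon in ℝ² with exactly four edges satisfying the Delzant condition is the image under an element of AGL(2,ℤ) of a standard Hirzebruch trapezoid with parameters (a, b, m) for some non-negative integer m and positive reals a, b with a > mb/2. -/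
/-- The standard Hirzebruch trapezoid with parameters `(a, b, m)`. -/
def hirzTrap (a b : ℝ) (m : ℕ) : Set (ℝ × ℝ) :=
  convexHull ℝ
    {(0, 0), (0, b), (a - (m : ℝ) * b / 2, b), (a + (m : ℝ) * b / 2, 0)}

/-- The affine map `x ↦ Rx + v` on `ℝ²`, for `R` an integer matrix. -/
def aglMap (R : Matrix (Fin 2) (Fin 2) ℤ) (v : ℝ × ℝ) (x : ℝ × ℝ) : ℝ × ℝ :=
  ((R 0 0 : ℝ) * x.1 + (R 0 1 : ℝ) * x.2 + v.1,
   (R 1 0 : ℝ) * x.1 + (R 1 1 : ℝ) * x.2 + v.2)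

lemma inv2 (a0 b0 a1 b1 w1 w2 X Y : ℝ) (hD : a0*b1 - b0*a1 = 1)
    (h1 : a0*w1 + b0*w2 = X) (h2 : a1*w1 + b1*w2 = Y) :
    w1 = b1*X - b0*Y ∧ w2 = a0*Y - a1*X := by
  constructor
  · linear_combination b1*h1 - b0*h2 - w1*hD
  · linear_combination a0*h2 - a1*h1 - w2*hD

lemma rep2 (a0 b0 a1 b1 w1 w2 : ℤ) (hD : a0*b1 - b0*a1 = 1) :
    w1 = (w1*b1 - w2*a1)*a0 + (a0*w2 - b0*w1)*a1 ∧
    w2 = (w1*b1 - w2*a1)*b0 + (a0*w2 - b0*w1)*b1 := by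
  constructor
  · linear_combination (-w1)*hD
  · linear_combination (-w2)*hD

lemma aglMap_image_hull (R : Matrix (Fin 2) (Fin 2) ℤ) (v : ℝ × ℝ) (S : Set (ℝ × ℝ)) :
    aglMap R v '' convexHull ℝ S = convexHull ℝ (aglMap R v '' S) := by
  let L : (ℝ × ℝ) →ₗ[ℝ] (ℝ × ℝ) :=
    { toFun := fun x => ((R 0 0 : ℝ) * x.1 + (R 0 1 : ℝ) * x.2,
        (R 1 0 : ℝ) * x.1 + (R 1 1 : ℝ) * x.2)
      map_add' := by intro x y; simp [Prod.ext_iff]; constructor <;> ring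
      map_smul' := by intro c x; simp [Prod.ext_iff, smul_eq_mul]; constructor <;> ring }
  have h : aglMap R v = fun x => L x + v := by
    funext x; simp [aglMap, L, Prod.ext_iff]
  have key : ∀ s : Set (ℝ × ℝ), (fun x => L x + v) '' convexHull ℝ s
      = convexHull ℝ ((fun x => L x + v) '' s) := by
    intro s
    have : (fun x => L x + v) = ⇑(L.toAffineMap + AffineMap.const ℝ (ℝ × ℝ) v) := by
      funext x; simp
    rw [this, AffineMap.image_convexHull]
  rw [h, key]

lemma range_fin4 {α : Type*} (p : Fin 4 → α) : Set.range p = {p 0, p 1, p 2, p 3} := by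
  ext x
  simp only [Set.mem_range, Set.mem_insert_iff, Set.mem_singleton_iff]
  constructor
  · rintro ⟨i, rfl⟩; fin_cases i <;> simp
  · rintro (rfl | rfl | rfl | rfl) <;> exact ⟨_, rfl⟩

set_option maxHeartbeats 2000000 in
/-- Every four-edged Delzant polygon (vertices `p i` in counterclockwise
cyclic order, distinct, with primitive integral inward edge normals `u i`
having consecutive determinants `1`) is the image of a standard Hirzebruch
trapezoid under an element of `AGL(2,ℤ)`. -/
theorem stmt_12 (p : Fin 4 → ℝ × ℝ) (u : Fin 4 → ℤ × ℤ)
    (hinj : Function.Injective p)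
    (hdet : ∀ i : Fin 4,
      (u i).1 * (u (i + 1)).2 - (u i).2 * (u (i + 1)).1 = 1)
    (hprim : ∀ i : Fin 4, Int.gcd (u i).1 (u i).2 = 1)
    (hperp : ∀ i : Fin 4,
      ((u i).1 : ℝ) * ((p (i + 1)).1 - (p i).1) +
        ((u i).2 : ℝ) * ((p (i + 1)).2 - (p i).2) = 0)
    (hin : ∀ i : Fin 4, ∀ x ∈ convexHull ℝ (Set.range p),
      ((u i).1 : ℝ) * (x.1 - (p i).1) + ((u i).2 : ℝ) * (x.2 - (p i).2) ≥ 0) :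
    ∃ (m : ℕ) (a b : ℝ), b > 0 ∧ a > (m : ℝ) * b / 2 ∧
      ∃ R : Matrix (Fin 2) (Fin 2) ℤ, (R.det = 1 ∨ R.det = -1) ∧
        ∃ v : ℝ × ℝ,
          aglMap R v '' hirzTrap a b m = convexHull ℝ (Set.range p) := by
  have i01 : (0:Fin 4)+1 = 1 := rfl
  have i12 : (1:Fin 4)+1 = 2 := rfl
  have i23 : (2:Fin 4)+1 = 3 := rfl
  have i30 : (3:Fin 4)+1 = 0 := rfl
  have hp0 := hperp 0
  have hp1 := hperp 1
  have hp2 := hperp 2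
  have hp3 := hperp 3
  rw [i01] at hp0; rw [i12] at hp1; rw [i23] at hp2; rw [i30] at hp3
  have hd0 := hdet 0
  have hd1 := hdet 1
  have hd2 := hdet 2
  have hd3 := hdet 3
  rw [i01] at hd0; rw [i12] at hd1; rw [i23] at hd2; rw [i30] at hd3
  obtain ⟨K, hK⟩ : ∃ x : ℤ, x = (u 0).1 * (u 2).2 - (u 0).2 * (u 2).1 := ⟨_, rfl⟩
  obtain ⟨S, hS⟩ : ∃ x : ℤ, x = (u 3).1 * (u 1).2 - (u 3).2 * (u 1).1 := ⟨_, rfl⟩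
  obtain ⟨J1, J2⟩ := rep2 (u 0).1 (u 0).2 (u 1).1 (u 1).2 (u 2).1 (u 2).2 hd0
  obtain ⟨J3, J4⟩ := rep2 (u 0).1 (u 0).2 (u 1).1 (u 1).2 (u 3).1 (u 3).2 hd0
  have I1 : (u 2).1 = -(u 0).1 + K * (u 1).1 := by
    linear_combination J1 - (u 0).1 * hd1 - (u 1).1 * hK
  have I2 : (u 2).2 = -(u 0).2 + K * (u 1).2 := by
    linear_combination J2 - (u 0).2 * hd1 - (u 1).2 * hK
  have I3 : (u 3).1 = S * (u 0).1 - (u 1).1 := by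
    linear_combination J3 - (u 1).1 * hd3 - (u 0).1 * hS
  have I4 : (u 3).2 = S * (u 0).2 - (u 1).2 := by
    linear_combination J4 - (u 1).2 * hd3 - (u 0).2 * hS
  have I5 : K * S = 0 := by
    have h2' := hd2
    rw [I1, I2, I3, I4] at h2'
    linear_combination -h2' + (1 - K*S) * hd0
  have RD : ((u 0).1:ℝ) * ((u 1).2:ℝ) - ((u 0).2:ℝ) * ((u 1).1:ℝ) = 1 := by exact_mod_cast hd0
  have RD3 : ((u 3).1:ℝ) * ((u 0).2:ℝ) - ((u 3).2:ℝ) * ((u 0).1:ℝ) = 1 := by exact_mod_cast hd3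
  have RI1 : ((u 2).1:ℝ) = -((u 0).1:ℝ) + (K:ℝ) * ((u 1).1:ℝ) := by exact_mod_cast I1
  have RI2 : ((u 2).2:ℝ) = -((u 0).2:ℝ) + (K:ℝ) * ((u 1).2:ℝ) := by exact_mod_cast I2
  have RI3 : ((u 3).1:ℝ) = (S:ℝ) * ((u 0).1:ℝ) - ((u 1).1:ℝ) := by exact_mod_cast I3
  have RI4 : ((u 3).2:ℝ) = (S:ℝ) * ((u 0).2:ℝ) - ((u 1).2:ℝ) := by exact_mod_cast I4
  have RI5 : (K:ℝ) * (S:ℝ) = 0 := by exact_mod_cast I5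
  obtain ⟨L0, hL0⟩ : ∃ x : ℝ, x = ((u 1).1:ℝ) * ((p 0).1 - (p 1).1) + ((u 1).2:ℝ) * ((p 0).2 - (p 1).2) := ⟨_, rfl⟩
  obtain ⟨L1, hL1⟩ : ∃ x : ℝ, x = ((u 2).1:ℝ) * ((p 1).1 - (p 2).1) + ((u 2).2:ℝ) * ((p 1).2 - (p 2).2) := ⟨_, rfl⟩
  obtain ⟨L2, hL2⟩ : ∃ x : ℝ, x = ((u 3).1:ℝ) * ((p 2).1 - (p 3).1) + ((u 3).2:ℝ) * ((p 2).2 - (p 3).2) := ⟨_, rfl⟩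
  obtain ⟨L3, hL3⟩ : ∃ x : ℝ, x = ((u 0).1:ℝ) * ((p 3).1 - (p 0).1) + ((u 0).2:ℝ) * ((p 3).2 - (p 0).2) := ⟨_, rfl⟩
  have hL0nn : 0 ≤ L0 := by
    have h := hin 1 (p 0) (subset_convexHull ℝ _ (Set.mem_range_self 0))
    rw [hL0]; exact h.le
  have hL1nn : 0 ≤ L1 := by
    have h := hin 2 (p 1) (subset_convexHull ℝ _ (Set.mem_range_self 1))
    rw [hL1]; exact h.le
  have hL2nn : 0 ≤ L2 := by
    have h := hin 3 (p 2) (subset_convexHull ℝ _ (Set.mem_range_self 2))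
    rw [hL2]; exact h.le
  have hL3nn : 0 ≤ L3 := by
    have h := hin 0 (p 3) (subset_convexHull ℝ _ (Set.mem_range_self 3))
    rw [hL3]; exact h.le
  obtain ⟨W11, W12⟩ := inv2 ((u 0).1:ℝ) ((u 0).2:ℝ) ((u 1).1:ℝ) ((u 1).2:ℝ)
    ((p 1).1 - (p 0).1) ((p 1).2 - (p 0).2) 0 (-L0) RD (by linear_combination hp0)
    (by linear_combination hL0)
  have Cx1 : (p 1).1 = (p 0).1 + ((u 0).2:ℝ) * L0 := by linear_combination W11
  have Cy1 : (p 1).2 = (p 0).2 - ((u 0).1:ℝ) * L0 := by linear_combination W12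
  have e1a : ((u 0).1:ℝ) * ((p 2).1 - (p 1).1) + ((u 0).2:ℝ) * ((p 2).2 - (p 1).2) = L1 := by
    linear_combination ((p 2).1 - (p 1).1) * RI1 + ((p 2).2 - (p 1).2) * RI2 + (K:ℝ) * hp1 - hL1
  obtain ⟨W21, W22⟩ := inv2 ((u 0).1:ℝ) ((u 0).2:ℝ) ((u 1).1:ℝ) ((u 1).2:ℝ)
    ((p 2).1 - (p 0).1) ((p 2).2 - (p 0).2) L1 (-L0) RD
    (by linear_combination hp0 + e1a) (by linear_combination hL0 + hp1)
  have Cx2 : (p 2).1 = (p 0).1 + ((u 1).2:ℝ)*L1 + ((u 0).2:ℝ)*L0 := by linear_combination W21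
  have Cy2 : (p 2).2 = (p 0).2 - ((u 1).1:ℝ)*L1 - ((u 0).1:ℝ)*L0 := by linear_combination W22
  have factA : ((u 0).1:ℝ)*((p 3).1-(p 2).1) + ((u 0).2:ℝ)*((p 3).2-(p 2).2)
      = (K:ℝ) * (((u 1).1:ℝ)*((p 3).1-(p 2).1) + ((u 1).2:ℝ)*((p 3).2-(p 2).2)) := by
    linear_combination ((p 3).1-(p 2).1) * RI1 + ((p 3).2-(p 2).2) * RI2 - hp2
  have factB : ((u 1).1:ℝ)*((p 3).1-(p 2).1) + ((u 1).2:ℝ)*((p 3).2-(p 2).2) = L2 := by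
    linear_combination -hL2 + ((p 3).1-(p 2).1) * RI3 + ((p 3).2-(p 2).2) * RI4
      + (S:ℝ) * factA
      + (((u 1).1:ℝ)*((p 3).1-(p 2).1) + ((u 1).2:ℝ)*((p 3).2-(p 2).2)) * RI5
  have X3 : ((u 0).1:ℝ)*((p 3).1-(p 0).1) + ((u 0).2:ℝ)*((p 3).2-(p 0).2)
      = L1 + (K:ℝ)*L2 := by
    linear_combination hp0 + e1a + factA + (K:ℝ) * factB
  have Y3 : ((u 1).1:ℝ)*((p 3).1-(p 0).1) + ((u 1).2:ℝ)*((p 3).2-(p 0).2)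
      = -L0 + L2 := by
    linear_combination hL0 + hp1 + factB
  obtain ⟨W31, W32⟩ := inv2 ((u 0).1:ℝ) ((u 0).2:ℝ) ((u 1).1:ℝ) ((u 1).2:ℝ)
    ((p 3).1 - (p 0).1) ((p 3).2 - (p 0).2) (L1 + (K:ℝ)*L2) (-L0 + L2) RD X3 Y3
  have Cx3 : (p 3).1 = (p 0).1 + ((u 1).2:ℝ)*(L1 + (K:ℝ)*L2) - ((u 0).2:ℝ)*(-L0 + L2) := by
    linear_combination W31
  have Cy3 : (p 3).2 = (p 0).2 + ((u 0).1:ℝ)*(-L0 + L2) - ((u 1).1:ℝ)*(L1 + (K:ℝ)*L2) := by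
    linear_combination W32
  have Rel1 : L3 = L1 + (K:ℝ)*L2 := by linear_combination hL3 + X3
  have Rel2 : (S:ℝ)*L3 = L2 - L0 := by
    linear_combination -hp3 + ((p 0).1-(p 3).1)*RI3 + ((p 0).2-(p 3).2)*RI4 + (S:ℝ)*hL3 + Y3
  have hL0pos : 0 < L0 := by
    rcases lt_or_eq_of_le hL0nn with h | h
    · exact h
    · exfalso
      have : p 1 = p 0 := Prod.ext_iff.mpr ⟨by rw [Cx1, ← h]; ring, by rw [Cy1, ← h]; ring⟩
      exact absurd (hinj this) (by decide)
  have hL1pos : 0 < L1 := by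
    rcases lt_or_eq_of_le hL1nn with h | h
    · exact h
    · exfalso
      have : p 2 = p 1 := Prod.ext_iff.mpr
        ⟨by rw [Cx2, Cx1, ← h]; ring, by rw [Cy2, Cy1, ← h]; ring⟩
      exact absurd (hinj this) (by decide)
  have hL2pos : 0 < L2 := by
    rcases lt_or_eq_of_le hL2nn with h | h
    · exact h
    · exfalso
      have : p 3 = p 2 := Prod.ext_iff.mpr
        ⟨by rw [Cx3, Cx2, ← h]; ring, by rw [Cy3, Cy2, ← h]; ring⟩
      exact absurd (hinj this) (by decide)
  have hL3pos : 0 < L3 := by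
    rcases lt_or_eq_of_le hL3nn with h | h
    · exact h
    · exfalso
      obtain ⟨Z1, Z2⟩ := inv2 ((u 3).1:ℝ) ((u 3).2:ℝ) ((u 0).1:ℝ) ((u 0).2:ℝ)
        ((p 0).1-(p 3).1) ((p 0).2-(p 3).2) 0 0 RD3 (by linear_combination hp3)
        (by linear_combination hL3 + h)
      have : p 0 = p 3 := Prod.ext_iff.mpr
        ⟨by linear_combination Z1, by linear_combination Z2⟩
      exact absurd (hinj this) (by decide)
  rcases mul_eq_zero.mp I5 with hk0 | hs0
  · -- K = 0
    have hkr : (K:ℝ) = 0 := by exact_mod_cast hk0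
    have hL2v : L2 = L0 + (S:ℝ)*L1 := by
      have h := Rel2
      have h3 : L3 = L1 := by rw [Rel1, hkr]; ring
      rw [h3] at h; linarith
    have Cx3' : (p 3).1 = (p 0).1 + ((u 1).2:ℝ)*L1 - ((u 0).2:ℝ)*((S:ℝ)*L1) := by
      rw [Cx3, hkr, hL2v]; ring
    have Cy3' : (p 3).2 = (p 0).2 - ((u 1).1:ℝ)*L1 + ((u 0).1:ℝ)*((S:ℝ)*L1) := by
      rw [Cy3, hkr, hL2v]; ring
    rcases le_or_gt 0 S with hsn | hsn
    · -- Case 3 : K = 0, S ≥ 0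
      have hm : ((S.toNat : ℕ) : ℝ) = (S:ℝ) := by exact_mod_cast Int.toNat_of_nonneg hsn
      refine ⟨S.toNat, L0 + (S:ℝ)*L1/2, L1, hL1pos, ?_, !![-(u 0).2, -(u 1).2; (u 0).1, (u 1).1],
        ?_, ((p 0).1 + ((u 1).2:ℝ)*L1 + ((u 0).2:ℝ)*L0, (p 0).2 - ((u 1).1:ℝ)*L1 - ((u 0).1:ℝ)*L0),
        ?_⟩
      · rw [hm]; linarith
      · left; rw [Matrix.det_fin_two_of]; linear_combination hd0
      · have e1 : L0 + (S:ℝ)*L1/2 - ((S.toNat : ℕ) : ℝ) * L1 / 2 = L0 := by rw [hm]; ring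
        have e2 : L0 + (S:ℝ)*L1/2 + ((S.toNat : ℕ) : ℝ) * L1 / 2 = L0 + (S:ℝ)*L1 := by
          rw [hm]; ring
        unfold hirzTrap
        rw [e1, e2, aglMap_image_hull, range_fin4 p]
        congr 1
        rw [Set.image_insert_eq, Set.image_insert_eq, Set.image_insert_eq, Set.image_singleton]
        have hE0 : aglMap !![-(u 0).2, -(u 1).2; (u 0).1, (u 1).1]
            ((p 0).1 + ((u 1).2:ℝ)*L1 + ((u 0).2:ℝ)*L0, (p 0).2 - ((u 1).1:ℝ)*L1 - ((u 0).1:ℝ)*L0)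
            ((0:ℝ), (0:ℝ)) = p 2 := by
          simp only [aglMap, Matrix.cons_val', Matrix.cons_val_zero, Matrix.cons_val_one,
            Matrix.head_cons, Matrix.empty_val', Matrix.cons_val_fin_one, Matrix.head_fin_const,
            Matrix.of_apply]
          rw [Prod.ext_iff]
          constructor
          · rw [Cx2]; push_cast; ring
          · rw [Cy2]; push_cast; ring
        have hE1 : aglMap !![-(u 0).2, -(u 1).2; (u 0).1, (u 1).1]
            ((p 0).1 + ((u 1).2:ℝ)*L1 + ((u 0).2:ℝ)*L0, (p 0).2 - ((u 1).1:ℝ)*L1 - ((u 0).1:ℝ)*L0)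
            ((0:ℝ), L1) = p 1 := by
          simp only [aglMap, Matrix.cons_val', Matrix.cons_val_zero, Matrix.cons_val_one,
            Matrix.head_cons, Matrix.empty_val', Matrix.cons_val_fin_one, Matrix.head_fin_const,
            Matrix.of_apply]
          rw [Prod.ext_iff]
          constructor
          · rw [Cx1]; push_cast; ring
          · rw [Cy1]; push_cast; ring
        have hE2 : aglMap !![-(u 0).2, -(u 1).2; (u 0).1, (u 1).1]
            ((p 0).1 + ((u 1).2:ℝ)*L1 + ((u 0).2:ℝ)*L0, (p 0).2 - ((u 1).1:ℝ)*L1 - ((u 0).1:ℝ)*L0)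
            (L0, L1) = p 0 := by
          simp only [aglMap, Matrix.cons_val', Matrix.cons_val_zero, Matrix.cons_val_one,
            Matrix.head_cons, Matrix.empty_val', Matrix.cons_val_fin_one, Matrix.head_fin_const,
            Matrix.of_apply]
          rw [Prod.ext_iff]
          constructor
          · push_cast; ring
          · push_cast; ring
        have hE3 : aglMap !![-(u 0).2, -(u 1).2; (u 0).1, (u 1).1]
            ((p 0).1 + ((u 1).2:ℝ)*L1 + ((u 0).2:ℝ)*L0, (p 0).2 - ((u 1).1:ℝ)*L1 - ((u 0).1:ℝ)*L0)
            (L0 + (S:ℝ)*L1, (0:ℝ)) = p 3 := by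
          simp only [aglMap, Matrix.cons_val', Matrix.cons_val_zero, Matrix.cons_val_one,
            Matrix.head_cons, Matrix.empty_val', Matrix.cons_val_fin_one, Matrix.head_fin_const,
            Matrix.of_apply]
          rw [Prod.ext_iff]
          constructor
          · rw [Cx3']; push_cast; ring
          · rw [Cy3']; push_cast; ring
        rw [hE0, hE1, hE2, hE3]
        ext x
        simp only [Set.mem_insert_iff, Set.mem_singleton_iff]
        tauto
    · -- Case 4 : K = 0, S < 0
      have hsn' : (0:ℤ) ≤ -S := by omega
      have hm : (((-S).toNat : ℕ) : ℝ) = -(S:ℝ) := by exact_mod_cast Int.toNat_of_nonneg hsn'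
      have key : L0 + (S:ℝ)*L1 = L2 := by linarith [hL2v]
      have key2 : (0:ℝ) < L0 + (S:ℝ)*L1 := by rw [key]; exact hL2pos
      refine ⟨(-S).toNat, L0 + (S:ℝ)*L1/2, L1, hL1pos, ?_, !![-(u 0).2, (u 1).2; (u 0).1, -(u 1).1],
        ?_, ((p 0).1 + ((u 0).2:ℝ)*L0, (p 0).2 - ((u 0).1:ℝ)*L0), ?_⟩
      · rw [hm]
        have h2 : L0 + (S:ℝ)*L1/2 - (-(S:ℝ)*L1/2) = L0 + (S:ℝ)*L1 := by ring
        linarith [key2, h2]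
      · right; rw [Matrix.det_fin_two_of]; linear_combination -hd0
      · have e1 : L0 + (S:ℝ)*L1/2 - (((-S).toNat : ℕ) : ℝ) * L1 / 2 = L0 + (S:ℝ)*L1 := by
          rw [hm]; ring
        have e2 : L0 + (S:ℝ)*L1/2 + (((-S).toNat : ℕ) : ℝ) * L1 / 2 = L0 := by rw [hm]; ring
        unfold hirzTrap
        rw [e1, e2, aglMap_image_hull, range_fin4 p]
        congr 1
        rw [Set.image_insert_eq, Set.image_insert_eq, Set.image_insert_eq, Set.image_singleton]
        have hE0 : aglMap !![-(u 0).2, (u 1).2; (u 0).1, -(u 1).1]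
            ((p 0).1 + ((u 0).2:ℝ)*L0, (p 0).2 - ((u 0).1:ℝ)*L0) ((0:ℝ), (0:ℝ)) = p 1 := by
          simp only [aglMap, Matrix.cons_val', Matrix.cons_val_zero, Matrix.cons_val_one,
            Matrix.head_cons, Matrix.empty_val', Matrix.cons_val_fin_one, Matrix.head_fin_const,
            Matrix.of_apply]
          rw [Prod.ext_iff]
          constructor
          · rw [Cx1]; push_cast; ring
          · rw [Cy1]; push_cast; ring
        have hE1 : aglMap !![-(u 0).2, (u 1).2; (u 0).1, -(u 1).1]
            ((p 0).1 + ((u 0).2:ℝ)*L0, (p 0).2 - ((u 0).1:ℝ)*L0) ((0:ℝ), L1) = p 2 := by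
          simp only [aglMap, Matrix.cons_val', Matrix.cons_val_zero, Matrix.cons_val_one,
            Matrix.head_cons, Matrix.empty_val', Matrix.cons_val_fin_one, Matrix.head_fin_const,
            Matrix.of_apply]
          rw [Prod.ext_iff]
          constructor
          · rw [Cx2]; push_cast; ring
          · rw [Cy2]; push_cast; ring
        have hE2 : aglMap !![-(u 0).2, (u 1).2; (u 0).1, -(u 1).1]
            ((p 0).1 + ((u 0).2:ℝ)*L0, (p 0).2 - ((u 0).1:ℝ)*L0)
            (L0 + (S:ℝ)*L1, L1) = p 3 := by
          simp only [aglMap, Matrix.cons_val', Matrix.cons_val_zero, Matrix.cons_val_one,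
            Matrix.head_cons, Matrix.empty_val', Matrix.cons_val_fin_one, Matrix.head_fin_const,
            Matrix.of_apply]
          rw [Prod.ext_iff]
          constructor
          · rw [Cx3']; push_cast; ring
          · rw [Cy3']; push_cast; ring
        have hE3 : aglMap !![-(u 0).2, (u 1).2; (u 0).1, -(u 1).1]
            ((p 0).1 + ((u 0).2:ℝ)*L0, (p 0).2 - ((u 0).1:ℝ)*L0) (L0, (0:ℝ)) = p 0 := by
          simp only [aglMap, Matrix.cons_val', Matrix.cons_val_zero, Matrix.cons_val_one,
            Matrix.head_cons, Matrix.empty_val', Matrix.cons_val_fin_one, Matrix.head_fin_const,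
            Matrix.of_apply]
          rw [Prod.ext_iff]
          constructor
          · push_cast; ring
          · push_cast; ring
        rw [hE0, hE1, hE2, hE3]
        ext x
        simp only [Set.mem_insert_iff, Set.mem_singleton_iff]
        tauto
  · -- S = 0
    have hsr : (S:ℝ) = 0 := by exact_mod_cast hs0
    have hL2L0 : L2 = L0 := by
      have h := Rel2
      rw [hsr] at h; linarith
    have Cx3' : (p 3).1 = (p 0).1 + ((u 1).2:ℝ)*(L1 + (K:ℝ)*L0) := by
      rw [Cx3, hL2L0]; ring
    have Cy3' : (p 3).2 = (p 0).2 - ((u 1).1:ℝ)*(L1 + (K:ℝ)*L0) := by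
      rw [Cy3, hL2L0]; ring
    have keyk : L1 + (K:ℝ)*L0 = L3 := by
      rw [Rel1, hL2L0]
    rcases le_or_gt 0 K with hkn | hkn
    · -- Case 1 : S = 0, K ≥ 0
      have hm : ((K.toNat : ℕ) : ℝ) = (K:ℝ) := by exact_mod_cast Int.toNat_of_nonneg hkn
      refine ⟨K.toNat, L1 + (K:ℝ)*L0/2, L0, hL0pos, ?_, !![(u 1).2, (u 0).2; -(u 1).1, -(u 0).1],
        ?_, p 0, ?_⟩
      · rw [hm]; linarith
      · right; rw [Matrix.det_fin_two_of]; linear_combination -hd0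
      · have e1 : L1 + (K:ℝ)*L0/2 - ((K.toNat : ℕ) : ℝ) * L0 / 2 = L1 := by rw [hm]; ring
        have e2 : L1 + (K:ℝ)*L0/2 + ((K.toNat : ℕ) : ℝ) * L0 / 2 = L1 + (K:ℝ)*L0 := by
          rw [hm]; ring
        unfold hirzTrap
        rw [e1, e2, aglMap_image_hull, range_fin4 p]
        congr 1
        rw [Set.image_insert_eq, Set.image_insert_eq, Set.image_insert_eq, Set.image_singleton]
        have hE0 : aglMap !![(u 1).2, (u 0).2; -(u 1).1, -(u 0).1] (p 0) ((0:ℝ), (0:ℝ)) = p 0 := by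
          simp only [aglMap, Matrix.cons_val', Matrix.cons_val_zero, Matrix.cons_val_one,
            Matrix.head_cons, Matrix.empty_val', Matrix.cons_val_fin_one, Matrix.head_fin_const,
            Matrix.of_apply]
          rw [Prod.ext_iff]
          constructor
          · push_cast; ring
          · push_cast; ring
        have hE1 : aglMap !![(u 1).2, (u 0).2; -(u 1).1, -(u 0).1] (p 0) ((0:ℝ), L0) = p 1 := by
          simp only [aglMap, Matrix.cons_val', Matrix.cons_val_zero, Matrix.cons_val_one,
            Matrix.head_cons, Matrix.empty_val', Matrix.cons_val_fin_one, Matrix.head_fin_const,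
            Matrix.of_apply]
          rw [Prod.ext_iff]
          constructor
          · rw [Cx1]; push_cast; ring
          · rw [Cy1]; push_cast; ring
        have hE2 : aglMap !![(u 1).2, (u 0).2; -(u 1).1, -(u 0).1] (p 0) (L1, L0) = p 2 := by
          simp only [aglMap, Matrix.cons_val', Matrix.cons_val_zero, Matrix.cons_val_one,
            Matrix.head_cons, Matrix.empty_val', Matrix.cons_val_fin_one, Matrix.head_fin_const,
            Matrix.of_apply]
          rw [Prod.ext_iff]
          constructor
          · rw [Cx2]; push_cast; ring
          · rw [Cy2]; push_cast; ring
        have hE3 : aglMap !![(u 1).2, (u 0).2; -(u 1).1, -(u 0).1] (p 0)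
            (L1 + (K:ℝ)*L0, (0:ℝ)) = p 3 := by
          simp only [aglMap, Matrix.cons_val', Matrix.cons_val_zero, Matrix.cons_val_one,
            Matrix.head_cons, Matrix.empty_val', Matrix.cons_val_fin_one, Matrix.head_fin_const,
            Matrix.of_apply]
          rw [Prod.ext_iff]
          constructor
          · rw [Cx3']; push_cast; ring
          · rw [Cy3']; push_cast; ring
        rw [hE0, hE1, hE2, hE3]
    · -- Case 2 : S = 0, K < 0
      have hkn' : (0:ℤ) ≤ -K := by omega
      have hm : (((-K).toNat : ℕ) : ℝ) = -(K:ℝ) := by exact_mod_cast Int.toNat_of_nonneg hkn'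
      refine ⟨(-K).toNat, L1 + (K:ℝ)*L0/2, L0, hL0pos, ?_, !![(u 1).2, -(u 0).2; -(u 1).1, (u 0).1],
        ?_, ((p 0).1 + ((u 0).2:ℝ)*L0, (p 0).2 - ((u 0).1:ℝ)*L0), ?_⟩
      · rw [hm]
        have h2 : L1 + (K:ℝ)*L0/2 - (-(K:ℝ)*L0/2) = L1 + (K:ℝ)*L0 := by ring
        linarith [keyk, hL3pos, h2]
      · left; rw [Matrix.det_fin_two_of]; linear_combination hd0
      · have e1 : L1 + (K:ℝ)*L0/2 - (((-K).toNat : ℕ) : ℝ) * L0 / 2 = L1 + (K:ℝ)*L0 := by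
          rw [hm]; ring
        have e2 : L1 + (K:ℝ)*L0/2 + (((-K).toNat : ℕ) : ℝ) * L0 / 2 = L1 := by rw [hm]; ring
        unfold hirzTrap
        rw [e1, e2, aglMap_image_hull, range_fin4 p]
        congr 1
        rw [Set.image_insert_eq, Set.image_insert_eq, Set.image_insert_eq, Set.image_singleton]
        have hE0 : aglMap !![(u 1).2, -(u 0).2; -(u 1).1, (u 0).1]
            ((p 0).1 + ((u 0).2:ℝ)*L0, (p 0).2 - ((u 0).1:ℝ)*L0) ((0:ℝ), (0:ℝ)) = p 1 := by
          simp only [aglMap, Matrix.cons_val', Matrix.cons_val_zero, Matrix.cons_val_one,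
            Matrix.head_cons, Matrix.empty_val', Matrix.cons_val_fin_one, Matrix.head_fin_const,
            Matrix.of_apply]
          rw [Prod.ext_iff]
          constructor
          · rw [Cx1]; push_cast; ring
          · rw [Cy1]; push_cast; ring
        have hE1 : aglMap !![(u 1).2, -(u 0).2; -(u 1).1, (u 0).1]
            ((p 0).1 + ((u 0).2:ℝ)*L0, (p 0).2 - ((u 0).1:ℝ)*L0) ((0:ℝ), L0) = p 0 := by
          simp only [aglMap, Matrix.cons_val', Matrix.cons_val_zero, Matrix.cons_val_one,
            Matrix.head_cons, Matrix.empty_val', Matrix.cons_val_fin_one, Matrix.head_fin_const,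
            Matrix.of_apply]
          rw [Prod.ext_iff]
          constructor
          · push_cast; ring
          · push_cast; ring
        have hE2 : aglMap !![(u 1).2, -(u 0).2; -(u 1).1, (u 0).1]
            ((p 0).1 + ((u 0).2:ℝ)*L0, (p 0).2 - ((u 0).1:ℝ)*L0)
            (L1 + (K:ℝ)*L0, L0) = p 3 := by
          simp only [aglMap, Matrix.cons_val', Matrix.cons_val_zero, Matrix.cons_val_one,
            Matrix.head_cons, Matrix.empty_val', Matrix.cons_val_fin_one, Matrix.head_fin_const,
            Matrix.of_apply]
          rw [Prod.ext_iff]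
          constructor
          · rw [Cx3']; push_cast; ring
          · rw [Cy3']; push_cast; ring
        have hE3 : aglMap !![(u 1).2, -(u 0).2; -(u 1).1, (u 0).1]
            ((p 0).1 + ((u 0).2:ℝ)*L0, (p 0).2 - ((u 0).1:ℝ)*L0) (L1, (0:ℝ)) = p 2 := by
          simp only [aglMap, Matrix.cons_val', Matrix.cons_val_zero, Matrix.cons_val_one,
            Matrix.head_cons, Matrix.empty_val', Matrix.cons_val_fin_one, Matrix.head_fin_const,
            Matrix.of_apply]
          rw [Prod.ext_iff]
          constructor
          · rw [Cx2]; push_cast; ring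
          · rw [Cy2]; push_cast; ring
        rw [hE0, hE1, hE2, hE3]
        ext x
        simp only [Set.mem_insert_iff, Set.mem_singleton_iff]
        tauto
end
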